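/- arXiv:1608.04460 — 8 statements merged into one kernel-verified Lean document; each statement's English description precedes it below -/
import Mathlib

section
/- Let G be a compact topological group acting continuously on a nonempty compact metrizable topological space X. Then there exists exactly one G-invariant Borel probability measure on X if and only if the action is transitive, i.e. for every x, y ∈ X there exists g ∈ G with g • x = y. -/
open MeasureTheory

section Aux

variable {G : Type*} [Group G] [TopologicalSpace G] [IsTopologicalGroup G] [CompactSpace G]
  [MeasurableSpace G] [BorelSpace G]
  {X : Type*} [TopologicalSpace X] [CompactSpace X] [TopologicalSpace.MetrizableSpace X]
  [Nonempty X] [MeasurableSpace X] [BorelSpace X]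
  [MulAction G X] [ContinuousSMul G X]

set_option linter.unusedSectionVars false

/-- The Haar probability measure on the compact group `G`. -/
noncomputable def auxHaar (G : Type*) [Group G] [TopologicalSpace G] [IsTopologicalGroup G]
    [CompactSpace G] [MeasurableSpace G] [BorelSpace G] [Nonempty G] : Measure G :=
  Measure.haarMeasure (⊤ : TopologicalSpace.PositiveCompacts G)

instance : Nonempty G := ⟨1⟩

instance auxHaar_haar : (auxHaar G).IsHaarMeasure :=
  Measure.isHaarMeasure_haarMeasure _

instance auxHaar_leftInv : (auxHaar G).IsMulLeftInvariant :=
  Measure.isMulLeftInvariant_haarMeasure _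

instance auxHaar_prob : IsProbabilityMeasure (auxHaar G) :=
  ⟨by
    rw [← TopologicalSpace.PositiveCompacts.coe_top (α := G)]
    exact Measure.haarMeasure_self⟩

lemma auxHaar_right_invariant (h : G) :
    Measure.map (· * h) (auxHaar G) = auxHaar G := by
  have : IsProbabilityMeasure (Measure.map (· * h) (auxHaar G)) :=
    Measure.isProbabilityMeasure_map (measurable_mul_const h).aemeasurable
  exact Measure.isHaarMeasure_eq_of_isProbabilityMeasure _ _

lemma continuous_smul_point (x : X) : Continuous fun g : G => g • x :=
  continuous_id.smul continuous_const

/-- The orbit measure at a point. -/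
noncomputable def orbitMeasure (x : X) : Measure X :=
  Measure.map (fun g : G => g • x) (auxHaar G)

instance orbitMeasure_prob (x : X) : IsProbabilityMeasure (orbitMeasure (G := G) x) :=
  Measure.isProbabilityMeasure_map (continuous_smul_point x).measurable.aemeasurable

lemma orbitMeasure_invariant (x : X) (g : G) :
    Measure.map (fun y => g • y) (orbitMeasure (G := G) x) = orbitMeasure (G := G) x := by
  rw [orbitMeasure, Measure.map_map (continuous_const_smul g).measurable
    (continuous_smul_point x).measurable]
  have : (fun y => g • y) ∘ (fun h : G => h • x) = (fun h : G => h • x) ∘ (fun h => g * h) := by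
    ext h; simp [Function.comp, mul_smul]
  rw [this, ← Measure.map_map (continuous_smul_point x).measurable
    (continuous_mul_left g).measurable, map_mul_left_eq_self]

lemma invariant_eq_orbitMeasure (x₀ : X) (htrans : ∀ x y : X, ∃ g : G, g • x = y)
    (μ : Measure X) (hμ : IsProbabilityMeasure μ)
    (hinv : ∀ g : G, Measure.map (fun x => g • x) μ = μ) :
    μ = orbitMeasure (G := G) x₀ := by
  haveI := hμ
  haveI : SecondCountableTopology X := by
    letI := TopologicalSpace.metrizableSpaceMetric X; infer_instance
  apply ext_of_forall_lintegral_eq_of_IsFiniteMeasure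
  intro f
  have fmeas : Measurable fun x : X => (f x : ENNReal) :=
    measurable_coe_nnreal_ennreal.comp f.continuous.measurable
  have fmeas0 : Measurable fun g : G => (f (g • x₀) : ENNReal) :=
    fmeas.comp (continuous_smul_point x₀).measurable
  -- key: the function x ↦ ∫⁻ g, f (g • x) ∂haar is constant
  have key : ∀ x : X, ∫⁻ g, (f (g • x) : ENNReal) ∂(auxHaar G)
      = ∫⁻ g, (f (g • x₀) : ENNReal) ∂(auxHaar G) := by
    intro x
    obtain ⟨h, hh⟩ := htrans x₀ x
    conv_rhs => rw [← auxHaar_right_invariant h]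
    rw [lintegral_map fmeas0 (measurable_mul_const h)]
    simp_rw [mul_smul, hh]
  calc ∫⁻ x, (f x : ENNReal) ∂μ
      = ∫⁻ _g, ∫⁻ x, (f x : ENNReal) ∂μ ∂(auxHaar G) := by
        rw [lintegral_const]; simp
    _ = ∫⁻ g, ∫⁻ x, (f (g • x) : ENNReal) ∂μ ∂(auxHaar G) := by
        congr 1; ext g
        conv_lhs => rw [← hinv g]
        rw [lintegral_map fmeas (continuous_const_smul g).measurable]
    _ = ∫⁻ x, ∫⁻ g, (f (g • x) : ENNReal) ∂(auxHaar G) ∂μ := by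
        apply lintegral_lintegral_swap
        exact (measurable_coe_nnreal_ennreal.comp
          (f.continuous.comp continuous_smul).measurable).aemeasurable
    _ = ∫⁻ _x, ∫⁻ g, (f (g • x₀) : ENNReal) ∂(auxHaar G) ∂μ := by simp_rw [key]
    _ = ∫⁻ g, (f (g • x₀) : ENNReal) ∂(auxHaar G) := by
        rw [lintegral_const]; simp
    _ = ∫⁻ x, (f x : ENNReal) ∂(orbitMeasure (G := G) x₀) := by
        rw [orbitMeasure, lintegral_map fmeas (continuous_smul_point x₀).measurable]

end Aux

/-- Let `G` be a compact topological group acting continuously on a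
nonempty compact metrizable topological space `X`. Then there exists exactly one
`G`-invariant Borel probability measure on `X` if and only if the action is transitive. -/
theorem unique_invariant_probabilityMeasure_iff_transitive
    {G : Type*} [Group G] [TopologicalSpace G] [IsTopologicalGroup G] [CompactSpace G]
    {X : Type*} [TopologicalSpace X] [CompactSpace X] [TopologicalSpace.MetrizableSpace X]
    [Nonempty X] [MeasurableSpace X] [BorelSpace X]
    [MulAction G X] [ContinuousSMul G X] :
    (∃! μ : Measure X, IsProbabilityMeasure μ ∧
        ∀ g : G, Measure.map (fun x => g • x) μ = μ) ↔
      ∀ x y : X, ∃ g : G, g • x = y := by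
  letI : MeasurableSpace G := borel G
  haveI : BorelSpace G := ⟨rfl⟩
  constructor
  · rintro ⟨μ, _hμ, huniq⟩ x y
    have hx : orbitMeasure (G := G) x = μ :=
      huniq _ ⟨inferInstance, orbitMeasure_invariant x⟩
    have hy : orbitMeasure (G := G) y = μ :=
      huniq _ ⟨inferInstance, orbitMeasure_invariant y⟩
    have horb : MeasurableSet (MulAction.orbit G x) := by
      have hc : IsCompact (MulAction.orbit G x) :=
        isCompact_range (continuous_smul_point x)
      exact hc.isClosed.measurableSet
    by_contra hxy
    have h1 : orbitMeasure (G := G) x (MulAction.orbit G x) = 1 := by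
      rw [orbitMeasure, Measure.map_apply (continuous_smul_point x).measurable horb]
      have : (fun g : G => g • x) ⁻¹' MulAction.orbit G x = Set.univ :=
        Set.eq_univ_of_forall fun g => MulAction.mem_orbit x g
      rw [this]; exact measure_univ
    have h2 : orbitMeasure (G := G) y (MulAction.orbit G x) = 0 := by
      rw [orbitMeasure, Measure.map_apply (continuous_smul_point y).measurable horb]
      have : (fun g : G => g • y) ⁻¹' MulAction.orbit G x = ∅ := by
        ext g
        simp only [Set.mem_preimage, Set.mem_empty_iff_false, iff_false]
        intro hg
        obtain ⟨h, hh⟩ := hg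
        exact hxy ⟨g⁻¹ * h, by
          simp only at hh
          rw [mul_smul, hh, inv_smul_smul]⟩
      rw [this]; exact measure_empty
    rw [hx] at h1; rw [hy] at h2
    rw [h1] at h2
    exact one_ne_zero h2
  · intro htrans
    obtain ⟨x₀⟩ := (inferInstance : Nonempty X)
    exact ⟨orbitMeasure (G := G) x₀, ⟨inferInstance, orbitMeasure_invariant x₀⟩,
      fun μ hμ => invariant_eq_orbitMeasure x₀ htrans μ hμ.1 hμ.2⟩
end

section
/- Let d, n ≥ 1 and let V₁, …, V_n be d × d complex unitary matrices. Define U as a matrix indexed by (Fin d) × (Fin n) with entries U (i,k) (j,l) = (V_k) i j if k = l and 0 otherwise (the control-unitary Σₖ Vₖ ⊗ |k⟩⟨k|). Then U is unitary, and for every d × d complex matrix ρ the partial trace over the second factor of U (ρ ⊗ (1/n) • 1ₙ) U* equals the random unitary channel output (1/n) Σₖ Vₖ ρ Vₖ*; explicitly, for all i, j: Σₖ (U * (ρ ⊗ ((1/n : ℂ) • 1ₙ)) * U*) (i,k) (j,k) = ((1/n) Σₖ Vₖ ρ Vₖ*) i j. -/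
open Matrix
open scoped Kronecker

/-- Given unitaries `V₁, …, Vₙ` on `ℂᵈ`, the control-unitary
`U = Σₖ Vₖ ⊗ |k⟩⟨k|` (with entries `U (i,k) (j,l) = (Vₖ) i j` if `k = l` and `0` otherwise)
is unitary, and for every `d × d` matrix `ρ` the partial trace over the second factor of
`U (ρ ⊗ (1/n) 1ₙ) U*` equals the random unitary channel output `(1/n) Σₖ Vₖ ρ Vₖ*`. -/
theorem control_unitary_realizes_random_unitary_channel
    (d n : ℕ) (hd : 1 ≤ d) (hn : 1 ≤ n)
    (V : Fin n → Matrix (Fin d) (Fin d) ℂ)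
    (hV : ∀ k, V k ∈ Matrix.unitaryGroup (Fin d) ℂ) :
    ∀ U : Matrix (Fin d × Fin n) (Fin d × Fin n) ℂ,
      (∀ (i j : Fin d) (k l : Fin n),
          U (i, k) (j, l) = if k = l then V k i j else 0) →
      U ∈ Matrix.unitaryGroup (Fin d × Fin n) ℂ ∧
      ∀ (ρ : Matrix (Fin d) (Fin d) ℂ) (i j : Fin d),
        (∑ k : Fin n,
            (U * (ρ ⊗ₖ ((1 / (n : ℂ)) • (1 : Matrix (Fin n) (Fin n) ℂ))) * Uᴴ) (i, k) (j, k))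
          = ((1 / (n : ℂ)) • ∑ k : Fin n, V k * ρ * (V k)ᴴ) i j := by
  intro U hU
  constructor
  · rw [Matrix.mem_unitaryGroup_iff]
    ext ⟨i, k⟩ ⟨j, l⟩
    have hv := hV k
    rw [Matrix.mem_unitaryGroup_iff] at hv
    have hvv : ∑ m, V k i m * star (V k j m) = if i = j then 1 else 0 := by
      have := congrFun (congrFun hv i) j
      simpa [Matrix.mul_apply, Matrix.star_apply, Matrix.one_apply, mul_comm] using this
    simp only [Matrix.mul_apply, Matrix.star_apply, Fintype.sum_prod_type, hU,
      Matrix.one_apply, Prod.mk.injEq]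
    by_cases hkl : k = l
    · subst hkl
      simp only [and_true, ite_true]
      rw [Finset.sum_comm]
      rw [show (∑ p : Fin n, ∑ m : Fin d,
          (if k = p then V k i m else 0) * star (if k = p then V k j m else 0)) =
          ∑ p : Fin n, (if k = p then ∑ m, V k i m * star (V k j m) else 0) from
        Finset.sum_congr rfl (fun p _ => by split <;> simp [Finset.mul_sum]),
        Finset.sum_ite_eq, hvv]
      simp
    · simp only [hkl, and_false, ite_false]
      apply Finset.sum_eq_zero; intro m _
      apply Finset.sum_eq_zero; intro p _
      by_cases h1 : k = p <;> by_cases h2 : l = p <;> simp_all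
  · intro ρ i j
    have key : ∀ k : Fin n,
        (U * (ρ ⊗ₖ ((1 / (n : ℂ)) • (1 : Matrix (Fin n) (Fin n) ℂ))) * Uᴴ) (i, k) (j, k)
          = (1 / (n : ℂ)) * (V k * ρ * (V k)ᴴ) i j := by
      intro k
      simp only [Matrix.mul_apply, Matrix.conjTranspose_apply, Fintype.sum_prod_type,
        Matrix.kroneckerMap_apply, Matrix.smul_apply, Matrix.one_apply, hU, smul_eq_mul]
      rw [show (∑ m : Fin d, ∑ p : Fin n, (∑ m' : Fin d, ∑ p' : Fin n,
            (if k = p' then V k i m' else 0) * (ρ m' m * (1 / (n:ℂ) * if p' = p then 1 else 0)))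
            * star (if k = p then V k j m else 0)) =
          ∑ m : Fin d, (∑ m' : Fin d, V k i m' * (ρ m' m * (1 / (n:ℂ))))
            * star (V k j m) from ?_]
      · rw [Finset.mul_sum]
        apply Finset.sum_congr rfl; intro m _
        simp only [Finset.sum_mul, Finset.mul_sum]
        apply Finset.sum_congr rfl; intro m' _
        ring
      · apply Finset.sum_congr rfl; intro m _
        rw [show (∑ p : Fin n, (∑ m' : Fin d, ∑ p' : Fin n,
              (if k = p' then V k i m' else 0) * (ρ m' m * (1 / (n:ℂ) * if p' = p then 1 else 0)))
              * star (if k = p then V k j m else 0)) =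
            ∑ p : Fin n, (if k = p then (∑ m' : Fin d, V k i m' * (ρ m' m * (1 / (n:ℂ))))
              * star (V k j m) else 0) from ?_, Finset.sum_ite_eq]
        · simp
        · apply Finset.sum_congr rfl; intro p _
          by_cases hkp : k = p
          · subst hkp
            simp only [ite_true]
            congr 1
            apply Finset.sum_congr rfl; intro m' _
            rw [show (∑ p' : Fin n, (if k = p' then V k i m' else 0) *
                (ρ m' m * (1 / (n:ℂ) * if p' = k then 1 else 0))) =
              ∑ p' : Fin n, (if k = p' then V k i m' * (ρ m' m * (1 / (n:ℂ))) else 0) from ?_,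
              Finset.sum_ite_eq]
            · simp
            · apply Finset.sum_congr rfl; intro p' _
              by_cases h : k = p' <;> simp [h, eq_comm]
          · simp [hkp]
    rw [Finset.sum_congr rfl (fun k _ => key k)]
    simp [Matrix.smul_apply, Matrix.sum_apply, Finset.mul_sum]
end

section
/- Let Φ be a ℂ-linear map on d × d complex matrices that is positive (it maps positive semidefinite matrices to positive semidefinite matrices), trace-preserving (trace(Φ(M)) = trace(M) for all M), and unital (Φ(1) = 1). Let p, q : Fin d → ℝ be such that Φ applied to the diagonal matrix with diagonal p equals the diagonal matrix with diagonal q (entries coerced into ℂ). Then there exists a d × d doubly stochastic real matrix D such that q = D *ᵥ p, i.e. qᵢ = Σⱼ Dᵢⱼ pⱼ for all i. -/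
open Matrix
open scoped ComplexOrder

/-- A real square matrix is doubly stochastic if it has nonnegative entries and all its
row sums and column sums equal `1`. -/
def IsDoublyStochastic {d : ℕ} (D : Matrix (Fin d) (Fin d) ℝ) : Prop :=
  (∀ i j, 0 ≤ D i j) ∧ (∀ i, ∑ j, D i j = 1) ∧ (∀ j, ∑ i, D i j = 1)

/-- Let `Φ` be a positive, trace-preserving, unital `ℂ`-linear map on
`d × d` complex matrices, and `p, q : Fin d → ℝ` with `Φ (diagonal p) = diagonal q`.
Then there is a doubly stochastic matrix `D` with `q = D *ᵥ p`. -/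
theorem exists_doublyStochastic_of_unital_channel_diagonal
    {d : ℕ}
    (Φ : Matrix (Fin d) (Fin d) ℂ →ₗ[ℂ] Matrix (Fin d) (Fin d) ℂ)
    (hpos : ∀ M : Matrix (Fin d) (Fin d) ℂ, M.PosSemidef → (Φ M).PosSemidef)
    (htr : ∀ M : Matrix (Fin d) (Fin d) ℂ, (Φ M).trace = M.trace)
    (hunital : Φ 1 = 1)
    (p q : Fin d → ℝ)
    (hpq : Φ (Matrix.diagonal fun i => (p i : ℂ)) = Matrix.diagonal fun i => (q i : ℂ)) :
    ∃ D : Matrix (Fin d) (Fin d) ℝ, IsDoublyStochastic D ∧ q = D *ᵥ p := by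
  classical
  set E : Fin d → Matrix (Fin d) (Fin d) ℂ :=
    fun j => Matrix.diagonal (Pi.single j 1) with hE
  have hEpsd : ∀ j, (E j).PosSemidef := by
    intro j
    exact Matrix.PosSemidef.diagonal (by
      intro i
      by_cases h : i = j <;> simp [Pi.single_apply, h])
  have hΦE : ∀ j, (Φ (E j)).PosSemidef := fun j => hpos _ (hEpsd j)
  have hnn : ∀ i j, 0 ≤ Φ (E j) i i := by
    intro i j
    simpa [Matrix.mulVec_single, dotProduct, Pi.single_apply]
      using (hΦE j).dotProduct_mulVec_nonneg (Pi.single i 1)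
  set D : Matrix (Fin d) (Fin d) ℝ := fun i j => (Φ (E j) i i).re with hD
  have hre : ∀ i j, ((D i j : ℂ)) = Φ (E j) i i := by
    intro i j
    have h := hnn i j
    rw [Complex.le_def] at h
    simp at h
    exact Complex.ext rfl (by simp [h.2])
  refine ⟨D, ⟨?_, ?_, ?_⟩, ?_⟩
  · intro i j
    have h := hnn i j
    rw [Complex.le_def] at h
    simpa using h.1
  · intro i
    have h1 : ∑ j, E j = 1 := by
      ext a b
      by_cases hab : a = b <;>
        simp [hE, Matrix.sum_apply, Matrix.diagonal_apply, Matrix.one_apply, Pi.single_apply,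
          hab, Finset.sum_ite_eq]
    have : ∑ j, Φ (E j) = 1 := by
      rw [← map_sum, h1, hunital]
    have h2 : ((∑ j, D i j : ℝ) : ℂ) = 1 := by
      push_cast
      rw [Finset.sum_congr rfl fun j _ => hre i j]
      have := congrFun (congrFun this i) i
      simpa [Matrix.sum_apply, Matrix.one_apply] using this
    exact_mod_cast h2
  · intro j
    have : (Φ (E j)).trace = 1 := by
      rw [htr]
      simp [hE, Matrix.trace_diagonal]
    have h2 : ((∑ i, D i j : ℝ) : ℂ) = 1 := by
      push_cast
      rw [Finset.sum_congr rfl fun i _ => hre i j]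
      simpa [Matrix.trace, Matrix.diag] using this
    exact_mod_cast h2
  · funext i
    have hdp : (Matrix.diagonal fun i => (p i : ℂ)) = ∑ j, (p j : ℂ) • E j := by
      ext a b
      simp [hE, Matrix.diagonal_apply, Matrix.sum_apply, Pi.single_apply, Finset.sum_ite_eq',
        eq_comm, mul_comm]
    have h : (q i : ℂ) = ∑ j, (p j : ℂ) * Φ (E j) i i := by
      have h0 := congrFun (congrFun hpq i) i
      rw [hdp, map_sum] at h0
      simpa [Matrix.sum_apply, Matrix.diagonal_apply] using h0.symm
    have h2 : ((q i : ℝ) : ℂ) = ((D *ᵥ p) i : ℝ) := by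
      rw [h]
      push_cast [Matrix.mulVec, dotProduct]
      exact Finset.sum_congr rfl fun j _ => by rw [hre i j]; ring
    exact_mod_cast h2
end

section
/- Let D be a d × d doubly stochastic real matrix and p : Fin d → ℝ. Then there exist n ∈ ℕ, permutations σ₁, …, σ_n of Fin d, and nonnegative reals λ₁, …, λ_n with Σₖ λₖ = 1, such that Σₖ λₖ • (Pₖ * Matrix.diagonal p * Pₖᵀ) = Matrix.diagonal (D *ᵥ p), where Pₖ is the permutation matrix of σₖ (so Pₖᵀ = Pₖ⁻¹). -/
open Matrix

/-- The permutation matrix of `σ`, with entries `P i j = 1` if `i = σ j` and `0` otherwise. -/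
def permMat {d : ℕ} (σ : Equiv.Perm (Fin d)) : Matrix (Fin d) (Fin d) ℝ :=
  Matrix.of fun i j => if i = σ j then 1 else 0

lemma permMat_conj {d : ℕ} (σ : Equiv.Perm (Fin d)) (p : Fin d → ℝ) :
    permMat σ * Matrix.diagonal p * (permMat σ)ᵀ
      = Matrix.diagonal fun i => p (σ.symm i) := by
  ext i j
  simp only [Matrix.mul_apply, Matrix.transpose_apply, permMat, Matrix.of_apply,
    Matrix.diagonal_apply, Finset.sum_mul, Matrix.mul_apply]
  rw [Finset.sum_eq_single (σ.symm i)]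
  · rw [Finset.sum_eq_single (σ.symm i)]
    · by_cases h : i = j
      · subst h; simp
      · have : ¬ j = σ (σ.symm i) := by simp [eq_comm]; exact fun hh => h (by simp [← hh])
        simp [this, h]
        exact fun hh => absurd hh.symm h
    · intro b _ hb
      have : ¬ σ.symm i = b := fun hh => hb hh.symm
      simp [show ¬ i = σ b from fun hh => this (by simp [hh])]
    · simp
  · intro b _ hb
    rw [Finset.sum_eq_zero]
    intro c _
    have : ¬ i = σ b := fun hh => hb (by simp [hh])
    simp only [this, if_false, zero_mul, mul_ite, mul_one, mul_zero, ite_mul, one_mul]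
    simp [this]
    exact fun _ h2 h3 => absurd (h2 ▸ h3) this
  · simp

/-- Let `D` be doubly stochastic and `p : Fin d → ℝ`. Then there are
permutations `σ₁, …, σₙ` and convex weights `λ₁, …, λₙ` such that
`Σₖ λₖ • (Pₖ * diagonal p * Pₖᵀ) = diagonal (D *ᵥ p)`, where `Pₖ` is the permutation
matrix of `σₖ` (so that `Pₖᵀ = Pₖ⁻¹`). -/
theorem diagonal_mulVec_eq_mix_of_permutation_conjugations
    {d : ℕ} (D : Matrix (Fin d) (Fin d) ℝ) (hD : IsDoublyStochastic D)
    (p : Fin d → ℝ) :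
    ∃ (n : ℕ) (σ : Fin n → Equiv.Perm (Fin d)) (lam : Fin n → ℝ),
      (∀ k, 0 ≤ lam k) ∧ (∑ k, lam k = 1) ∧
      (∑ k, lam k • (permMat (σ k) * Matrix.diagonal p * (permMat (σ k))ᵀ))
        = Matrix.diagonal (D *ᵥ p) := by
  have hD' : D ∈ doublyStochastic ℝ (Fin d) := by
    rw [mem_doublyStochastic_iff_sum]
    exact hD
  obtain ⟨w, hw0, hw1, hwD⟩ := exists_eq_sum_perm_of_mem_doublyStochastic hD'
  set m := Fintype.card (Equiv.Perm (Fin d))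
  obtain e : Fin m ≃ Equiv.Perm (Fin d) := (Fintype.equivFin _).symm
  refine ⟨m, fun k => (e k)⁻¹, fun k => w (e k), fun k => hw0 _, ?_, ?_⟩
  · rw [← hw1]; exact Fintype.sum_equiv e _ _ (fun k => rfl)
  · have key : ∀ k : Fin m,
        permMat ((e k)⁻¹) * Matrix.diagonal p * (permMat ((e k)⁻¹))ᵀ
          = Matrix.diagonal fun i => p (e k i) := by
      intro k; rw [permMat_conj]; rfl
    simp_rw [key]
    have : D *ᵥ p = fun i => ∑ σ : Equiv.Perm (Fin d), w σ * p (σ i) := by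
      funext i
      rw [← hwD]
      simp only [Matrix.mulVec, dotProduct, Finset.sum_apply, Matrix.sum_apply,
        Matrix.smul_apply, smul_eq_mul, Finset.sum_mul]
      rw [Finset.sum_comm]
      congr 1
      ext σ
      rw [Finset.sum_eq_single (σ i)]
      · simp [Equiv.Perm.permMatrix, PEquiv.toMatrix_apply, Equiv.toPEquiv_apply]
      · intro j _ hj
        simp [Equiv.Perm.permMatrix, PEquiv.toMatrix_apply, Equiv.toPEquiv_apply, Ne.symm hj]
      · simp
    rw [this]
    rw [Fintype.sum_equiv e _ (fun σ => w σ • Matrix.diagonal fun i => p (σ i)) (fun k => rfl)]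
    ext i j
    by_cases h : i = j
    · subst h; simp [Matrix.sum_apply, Matrix.diagonal_apply_eq, mul_comm]
    · simp [Matrix.sum_apply, Matrix.diagonal_apply, h]
end

section
/- Let D be a d × d doubly stochastic real matrix and let p : Fin d → ℝ satisfy pᵢ ≥ 0 for all i. Then the Shannon entropy does not decrease under D: Σᵢ negMulLog((D *ᵥ p) i) ≥ Σᵢ negMulLog(p i), where negMulLog x = −x log x. -/
open Matrix

/-- Shannon entropy `H(p) = Σᵢ negMulLog pᵢ` does not decrease under a
doubly stochastic matrix: `H(D *ᵥ p) ≥ H(p)` whenever `p` has nonnegative entries. -/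
theorem shannonEntropy_le_shannonEntropy_mulVec_doublyStochastic
    {d : ℕ} (D : Matrix (Fin d) (Fin d) ℝ) (hD : IsDoublyStochastic D)
    (p : Fin d → ℝ) (hp : ∀ i, 0 ≤ p i) :
    ∑ i, Real.negMulLog ((D *ᵥ p) i) ≥ ∑ i, Real.negMulLog (p i) := by
  obtain ⟨hDnn, hrow, hcol⟩ := hD
  calc ∑ i, Real.negMulLog (p i)
      = ∑ i, ∑ j, D i j • Real.negMulLog (p j) := by
        rw [Finset.sum_comm]
        refine Finset.sum_congr rfl fun j _ => ?_
        rw [← Finset.sum_smul, hcol j, one_smul]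
    _ ≤ ∑ i, Real.negMulLog ((D *ᵥ p) i) := by
        refine Finset.sum_le_sum fun i _ => ?_
        have := Real.concaveOn_negMulLog.le_map_sum
          (t := Finset.univ) (w := fun j => D i j) (p := p)
          (fun j _ => hDnn i j) (hrow i) (fun j _ => hp j)
        simpa [mulVec, dotProduct, smul_eq_mul] using this
end

section
/- Let D be a d × d doubly stochastic real matrix and let p : Fin d → ℝ be strictly decreasing (i < j implies p j < p i). If D *ᵥ p = p, then D is the identity matrix. -/
open Matrix

/-- If a nonnegative function sums to 1 and takes the value 1 somewhere, it vanishes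
elsewhere. -/
lemma aux_vanish {d : ℕ} (f : Fin d → ℝ) (hf : ∀ i, 0 ≤ f i) (hsum : ∑ i, f i = 1)
    (a : Fin d) (ha : f a = 1) (b : Fin d) (hb : b ≠ a) : f b = 0 := by
  have h : ∑ i ∈ Finset.univ.erase a, f i = 0 := by
    have := Finset.add_sum_erase Finset.univ f (Finset.mem_univ a)
    rw [hsum, ha] at this
    linarith
  have := (Finset.sum_eq_zero_iff_of_nonneg (fun i _ => hf i)).mp h b
    (Finset.mem_erase.mpr ⟨hb, Finset.mem_univ b⟩)
  exact this

/-- If a doubly stochastic matrix `D` fixes a strictly decreasing vector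
`p` (i.e. `D *ᵥ p = p`), then `D` is the identity matrix. -/
theorem doublyStochastic_eq_one_of_fixes_strictAnti
    {d : ℕ} (D : Matrix (Fin d) (Fin d) ℝ) (hD : IsDoublyStochastic D)
    (p : Fin d → ℝ) (hp : StrictAnti p) (hfix : D *ᵥ p = p) :
    D = 1 := by
  obtain ⟨hnn, hrow, hcol⟩ := hD
  have key : ∀ k : Fin d, D k k = 1 := by
    intro k
    induction k using WellFoundedLT.induction with
    | _ k IH =>
      -- entries left of the diagonal in row k vanish
      have hleft : ∀ j : Fin d, j < k → D k j = 0 := by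
        intro j hj
        exact aux_vanish (fun i => D i j) (fun i => hnn i j) (hcol j) j (IH j hj) k
          (by intro h; exact absurd h (ne_of_gt hj))
      have hrowk : ∑ j, D k j * (p j - p k) = 0 := by
        have h1 : ∑ j, D k j * p j = p k := congrFun hfix k
        have h2 : ∑ j, D k j * p k = p k := by
          rw [← Finset.sum_mul, hrow, one_mul]
        simp only [mul_sub]
        rw [Finset.sum_sub_distrib, h1, h2, sub_self]
      have hnonpos : ∀ j : Fin d, D k j * (p j - p k) ≤ 0 := by
        intro j
        rcases lt_trichotomy j k with h | h | h
        · rw [hleft j h]; simp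
        · rw [h]; simp
        · exact mul_nonpos_of_nonneg_of_nonpos (hnn k j) (by linarith [hp h])
      have hzero : ∀ j : Fin d, D k j * (p j - p k) = 0 := by
        intro j
        have := (Finset.sum_eq_zero_iff_of_nonpos (fun i _ => hnonpos i)).mp hrowk j
          (Finset.mem_univ j)
        exact this
      have hright : ∀ j : Fin d, k < j → D k j = 0 := by
        intro j hj
        rcases mul_eq_zero.mp (hzero j) with h | h
        · exact h
        · exact absurd h (by have := hp hj; intro h'; linarith)
      have : ∑ j, D k j = D k k := by
        rw [Finset.sum_eq_single k]
        · intro b _ hb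
          rcases lt_or_gt_of_ne hb with h | h
          · exact hleft b h
          · exact hright b h
        · intro h; exact absurd (Finset.mem_univ k) h
      rw [← this, hrow]
  ext i j
  by_cases h : i = j
  · subst h; simp [key i]
  · have : D i j = 0 :=
      aux_vanish (fun j => D i j) (fun j => hnn i j) (hrow i) i (key i) j (Ne.symm h)
    simp [this, Matrix.one_apply_ne h]
end

section
/- Split ℂ⁴ into the two sectors H₀ = span{e₀, e₁} and H₁ = span{e₂, e₃}. Call a 4 × 4 complex matrix M sector-block-diagonal if M i j = 0 whenever exactly one of the indices i, j belongs to {0, 1}. Call a 4 × 4 complex unitary U an allowed Doubled-Quantum-Theory unitary if conjugation by U preserves sector-block-diagonality, i.e. U M U* is sector-block-diagonal for every sector-block-diagonal M. Let ρ = (1/2)(E₀₀ + E₁₁) and σ = (1/2)(E₀₀ + E₂₂), where Eᵢᵢ is the standard basis matrix with a single 1 in position (i,i). Then there is no allowed Doubled-Quantum-Theory unitary U with U ρ U* = σ. -/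
open Matrix

/-- A `4 × 4` complex matrix is sector-block-diagonal (with respect to the split of `ℂ⁴`
into the sectors `H₀ = span{e₀, e₁}` and `H₁ = span{e₂, e₃}`) if its `(i, j)` entry
vanishes whenever exactly one of `i, j` belongs to `{0, 1}`. -/
def SectorBlockDiagonal (M : Matrix (Fin 4) (Fin 4) ℂ) : Prop :=
  ∀ i j : Fin 4, ¬ ((i : ℕ) < 2 ↔ (j : ℕ) < 2) → M i j = 0

/-- Let `ρ = (1/2)(E₀₀ + E₁₁)` and `σ = (1/2)(E₀₀ + E₂₂)`. There is no
allowed Doubled-Quantum-Theory unitary `U` (a `4 × 4` unitary whose conjugation action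
preserves sector-block-diagonality) with `U ρ U* = σ`. -/
theorem no_doubled_quantum_unitary_maps_rho_to_sigma :
    ¬ ∃ U : Matrix (Fin 4) (Fin 4) ℂ,
        U ∈ Matrix.unitaryGroup (Fin 4) ℂ ∧
        (∀ M : Matrix (Fin 4) (Fin 4) ℂ,
          SectorBlockDiagonal M → SectorBlockDiagonal (U * M * Uᴴ)) ∧
        U * ((1 / 2 : ℂ) •
              (Matrix.single (0 : Fin 4) (0 : Fin 4) 1 +
               Matrix.single (1 : Fin 4) (1 : Fin 4) 1)) * Uᴴ
          = (1 / 2 : ℂ) •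
              (Matrix.single (0 : Fin 4) (0 : Fin 4) 1 +
               Matrix.single (2 : Fin 4) (2 : Fin 4) 1) := by
  rintro ⟨U, hU, hpres, hmap⟩
  have hUU : Uᴴ * U = 1 := by
    simpa [Matrix.star_eq_conjTranspose] using hU.1
  obtain ⟨ρ', hρ'⟩ : ∃ M : Matrix (Fin 4) (Fin 4) ℂ,
      M = Matrix.single (0 : Fin 4) (0 : Fin 4) 1 +
        Matrix.single (1 : Fin 4) (1 : Fin 4) 1 := ⟨_, rfl⟩
  obtain ⟨σ', hσ'⟩ : ∃ M : Matrix (Fin 4) (Fin 4) ℂ,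
      M = Matrix.single (0 : Fin 4) (0 : Fin 4) 1 +
        Matrix.single (2 : Fin 4) (2 : Fin 4) 1 := ⟨_, rfl⟩
  obtain ⟨E01, hE01⟩ : ∃ M : Matrix (Fin 4) (Fin 4) ℂ,
      M = Matrix.single (0 : Fin 4) (1 : Fin 4) 1 := ⟨_, rfl⟩
  rw [← hρ', ← hσ'] at hmap
  -- conjugation of a product
  have key : ∀ A B : Matrix (Fin 4) (Fin 4) ℂ,
      (U * A * Uᴴ) * (U * B * Uᴴ) = U * (A * B) * Uᴴ := by
    intro A B
    calc (U * A * Uᴴ) * (U * B * Uᴴ) = U * A * (Uᴴ * U) * (B * Uᴴ) := by noncomm_ring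
      _ = U * (A * B) * Uᴴ := by rw [hUU]; noncomm_ring
  -- conjugation sends ρ' to σ'
  have hQ : U * ρ' * Uᴴ = σ' := by
    have h := congrArg (fun X => (2 : ℂ) • X) hmap
    simp only [Matrix.mul_smul, Matrix.smul_mul, smul_smul] at h
    norm_num at h
    exact h
  -- ρ' absorbs E01 on both sides
  have hρE : ρ' * E01 = E01 := by
    rw [hρ', hE01, add_mul, Matrix.single_mul_single_same,
      Matrix.single_mul_single_of_ne (h := by decide)]
    simp
  have hEρ : E01 * ρ' = E01 := by
    rw [hρ', hE01, mul_add, Matrix.single_mul_single_same,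
      Matrix.single_mul_single_of_ne (h := by decide)]
    simp
  obtain ⟨N, hN⟩ : ∃ M : Matrix (Fin 4) (Fin 4) ℂ, M = U * E01 * Uᴴ := ⟨_, rfl⟩
  -- N = σ' * N * σ'
  have hNQ : N = σ' * N * σ' := by
    rw [hN, ← hQ, key, key, hρE, hEρ]
  -- entries of σ'
  have hσe : ∀ i j : Fin 4,
      σ' i j = if (i = 0 ∧ j = 0) ∨ (i = 2 ∧ j = 2) then 1 else 0 := by
    intro i j
    rw [hσ']
    fin_cases i <;> fin_cases j <;>
      simp [Matrix.single, Matrix.of_apply, Matrix.add_apply]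
  have hkey : ∀ i j : Fin 4, N i j = (σ' * N * σ') i j := fun i j => by
    conv_lhs => rw [hNQ]
  -- entries outside {0,2} × {0,2} vanish
  have hz : ∀ i j : Fin 4, (i ≠ 0 ∧ i ≠ 2) ∨ (j ≠ 0 ∧ j ≠ 2) → N i j = 0 := by
    intro i j hij
    rw [hkey i j]
    fin_cases i <;> fin_cases j <;>
      first
        | exact absurd hij (by decide)
        | simp [Matrix.mul_apply, Fin.sum_univ_four, hσe]
  -- N is sector-block-diagonal
  have hNbd : SectorBlockDiagonal N := by
    rw [hN]
    apply hpres
    intro i j hij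
    rw [hE01]
    fin_cases i <;> fin_cases j <;>
      first
        | exact absurd hij (by decide)
        | simp [Matrix.single, Matrix.of_apply]
  have h02 : N 0 2 = 0 := hNbd 0 2 (by simp)
  have h20 : N 2 0 = 0 := hNbd 2 0 (by simp)
  -- N * N = 0
  have hN2 : N * N = 0 := by
    have hEE : E01 * E01 = 0 := by
      rw [hE01, Matrix.single_mul_single_of_ne (h := by decide)]
    rw [hN, key, hEE]
    simp
  have h00 : N 0 0 = 0 := by
    have h := congrFun (congrFun hN2 0) 0
    have h01 : N 0 1 = 0 := hz 0 1 (Or.inr (by decide))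
    have h03 : N 0 3 = 0 := hz 0 3 (Or.inr (by decide))
    simp [Matrix.mul_apply, Fin.sum_univ_four, h01, h02, h03] at h
    exact h
  -- trace N = trace E01 = 0
  have htr : N.trace = 0 := by
    rw [hN, Matrix.trace_mul_cycle, hUU, Matrix.one_mul, hE01]
    exact Matrix.trace_single_eq_of_ne _ _ _ (by decide)
  have h22 : N 2 2 = 0 := by
    have h11 : N 1 1 = 0 := hz 1 1 (Or.inl (by decide))
    have h33 : N 3 3 = 0 := hz 3 3 (Or.inl (by decide))
    have h := htr
    simp [Matrix.trace, Matrix.diag, Fin.sum_univ_four, h00, h11, h33] at h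
    exact h
  -- hence N = 0
  have hNzero : N = 0 := by
    ext i j
    fin_cases i <;> fin_cases j <;> simp only [Matrix.zero_apply] <;>
      first
        | exact h00
        | exact h02
        | exact h20
        | exact h22
        | exact hz _ _ (by decide)
  -- but then E01 = 0, contradiction
  have hunconj : Uᴴ * (U * E01 * Uᴴ) * U = E01 := by
    calc Uᴴ * (U * E01 * Uᴴ) * U = (Uᴴ * U) * E01 * (Uᴴ * U) := by noncomm_ring
      _ = E01 := by rw [hUU]; simp
  have hE0 : E01 = 0 := by
    rw [← hunconj, ← hN, hNzero]
    simp
  have h := congrFun (congrFun hE0 0) 1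
  simp [hE01, Matrix.single, Matrix.of_apply] at h
end

section
/- Split ℂ⁴ into the two sectors H₀ = span{e₀, e₁} and H₁ = span{e₂, e₃}, and call a 4 × 4 complex matrix M sector-block-diagonal if M i j = 0 whenever exactly one of i, j belongs to {0, 1}. Consider matrices on ℂ⁴ ⊗ ℂ⁴ indexed by (Fin 4) × (Fin 4), and let E be the standard basis matrix with a single 1 in position ((0,0), (2,2)). Then: (a) every entry of E at a pair of indices ((i,k), (j,l)) with (i,k) in the composite even sector {(i,k) : (i ∈ {0,1} ∧ k ∈ {0,1}) ∨ (i ∈ {2,3} ∧ k ∈ {2,3})} and (j,l) outside it, or vice versa, is zero; and (b) E does not belong to the ℂ-linear span of the Kronecker products {M ⊗ N : M, N sector-block-diagonal 4 × 4 matrices}. -/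
open Matrix
open scoped Kronecker

/-- A composite index `(i, k)` lies in the composite even sector if either both `i` and `k`
belong to `{0, 1}` or both belong to `{2, 3}`. -/
def CompositeEven (x : Fin 4 × Fin 4) : Prop :=
  ((x.1 : ℕ) < 2 ∧ (x.2 : ℕ) < 2) ∨ (¬ (x.1 : ℕ) < 2 ∧ ¬ (x.2 : ℕ) < 2)

/-- Let `E` be the standard basis matrix on `ℂ⁴ ⊗ ℂ⁴` with a single `1`
in position `((0,0), (2,2))`. Then (a) every entry of `E` connecting the composite even
sector to its complement vanishes, and (b) `E` does not lie in the `ℂ`-span of Kronecker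
products of sector-block-diagonal matrices. -/
theorem doubled_quantum_violates_local_tomography :
    (∀ i k j l : Fin 4,
        (CompositeEven (i, k) ∧ ¬ CompositeEven (j, l)) ∨
          (¬ CompositeEven (i, k) ∧ CompositeEven (j, l)) →
        Matrix.single (((0 : Fin 4), (0 : Fin 4)))
            (((2 : Fin 4), (2 : Fin 4))) (1 : ℂ) (i, k) (j, l) = 0) ∧
    Matrix.single (((0 : Fin 4), (0 : Fin 4))) (((2 : Fin 4), (2 : Fin 4))) (1 : ℂ)
      ∉ Submodule.span ℂ
          {X : Matrix (Fin 4 × Fin 4) (Fin 4 × Fin 4) ℂ |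
            ∃ M N : Matrix (Fin 4) (Fin 4) ℂ,
              SectorBlockDiagonal M ∧ SectorBlockDiagonal N ∧ X = M ⊗ₖ N} := by
  constructor
  · rintro i k j l h
    simp only [Matrix.single, Matrix.of_apply] at *
    split_ifs with hc
    · obtain ⟨h1, h2⟩ := hc
      rw [← h1, ← h2] at h
      have he0 : CompositeEven ((0 : Fin 4), (0 : Fin 4)) := by left; constructor <;> decide
      have he2 : CompositeEven ((2 : Fin 4), (2 : Fin 4)) := by right; constructor <;> decide
      rcases h with ⟨_, h⟩ | ⟨h, _⟩ <;> exact absurd (by assumption) h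
    · rfl
  · intro h
    have key : ∀ X ∈ Submodule.span ℂ
        {X : Matrix (Fin 4 × Fin 4) (Fin 4 × Fin 4) ℂ |
          ∃ M N : Matrix (Fin 4) (Fin 4) ℂ,
            SectorBlockDiagonal M ∧ SectorBlockDiagonal N ∧ X = M ⊗ₖ N},
        X ((0 : Fin 4), (0 : Fin 4)) ((2 : Fin 4), (2 : Fin 4)) = 0 := by
      intro X hX
      induction hX using Submodule.span_induction with
      | mem X hX =>
        obtain ⟨M, N, hM, hN, rfl⟩ := hX
        have : M 0 2 = 0 := hM 0 2 (by decide)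
        simp [Matrix.kroneckerMap_apply, this]
      | zero => simp
      | add _ _ _ _ ha hb => rw [Matrix.add_apply, ha, hb, add_zero]
      | smul c _ _ hx => rw [Matrix.smul_apply, hx, smul_zero]
    have h0 := key _ h
    simp [Matrix.single] at h0
end
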